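/- Let n and x be natural numbers with x ≤ n. Then there exists a unique real number τ with 0 < τ < 1 such that I_n(τ, x) = I_n(1 − τ, n − x). -/

import Mathlib

open Set intervalIntegral

/-- `I_n(a, x) = a^{x+2} ∫₀¹ t^{x+1} (1 − t) (1 − a t)^{n−x} dt`. -/
noncomputable def In (n x : ℕ) (a : ℝ) : ℝ :=
  a ^ (x + 2) * ∫ t in (0 : ℝ)..1, t ^ (x + 1) * (1 - t) * (1 - a * t) ^ (n - x)

noncomputable def Pint (n k : ℕ) (a : ℝ) : ℝ :=
  ∫ s in (0:ℝ)..a, s ^ (k + 1) * (1 - s) ^ (n - k)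

noncomputable def Qint (n k : ℕ) (a : ℝ) : ℝ :=
  ∫ s in (0:ℝ)..a, s ^ (k + 2) * (1 - s) ^ (n - k)

lemma contg (n k : ℕ) (a : ℝ) :
    Continuous (fun s : ℝ => s ^ (k + 1) * (a - s) * (1 - s) ^ (n - k)) := by fun_prop

lemma In_eq_int (n k : ℕ) {a : ℝ} (ha : a ≠ 0) :
    In n k a = (∫ s in (0:ℝ)..a, s ^ (k + 1) * (a - s) * (1 - s) ^ (n - k)) / a := by
  have key := intervalIntegral.integral_comp_mul_left
    (fun s : ℝ => s ^ (k + 1) * (a - s) * (1 - s) ^ (n - k)) ha (a := 0) (b := 1)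
  simp only [mul_zero, mul_one] at key
  have expand : ∀ t : ℝ, (a * t) ^ (k + 1) * (a - a * t) * (1 - a * t) ^ (n - k)
      = a ^ (k + 2) * (t ^ (k + 1) * (1 - t) * (1 - a * t) ^ (n - k)) := by
    intro t; ring
  rw [In, ← intervalIntegral.integral_const_mul]
  simp_rw [← expand]
  rw [key, smul_eq_mul, div_eq_inv_mul]

lemma In_eq (n k : ℕ) {a : ℝ} (ha : a ≠ 0) :
    In n k a = Pint n k a - Qint n k a / a := by
  rw [In_eq_int n k ha]
  have h1 : IntervalIntegrable (fun s : ℝ => a * (s ^ (k + 1) * (1 - s) ^ (n - k)))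
      MeasureTheory.volume 0 a := (by fun_prop : Continuous _).intervalIntegrable 0 a
  have h2 : IntervalIntegrable (fun s : ℝ => s ^ (k + 2) * (1 - s) ^ (n - k))
      MeasureTheory.volume 0 a := (by fun_prop : Continuous _).intervalIntegrable 0 a
  have split : (∫ s in (0:ℝ)..a, s ^ (k + 1) * (a - s) * (1 - s) ^ (n - k))
      = a * Pint n k a - Qint n k a := by
    have : ∀ s : ℝ, s ^ (k + 1) * (a - s) * (1 - s) ^ (n - k)
        = a * (s ^ (k + 1) * (1 - s) ^ (n - k)) - s ^ (k + 2) * (1 - s) ^ (n - k) := by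
      intro s; ring
    simp_rw [this]
    rw [intervalIntegral.integral_sub h1 h2, intervalIntegral.integral_const_mul]
    rfl
  rw [split]
  field_simp

lemma Pint_cont (n k : ℕ) : Continuous (Pint n k) :=
  intervalIntegral.continuous_primitive
    (fun a b => (by fun_prop : Continuous (fun s : ℝ => s ^ (k + 1) * (1 - s) ^ (n - k))).intervalIntegrable a b) 0

lemma Qint_cont (n k : ℕ) : Continuous (Qint n k) :=
  intervalIntegral.continuous_primitive
    (fun a b => (by fun_prop : Continuous (fun s : ℝ => s ^ (k + 2) * (1 - s) ^ (n - k))).intervalIntegrable a b) 0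

lemma In_contOn (n k : ℕ) : ContinuousOn (In n k) {a : ℝ | a ≠ 0} := by
  apply ContinuousOn.congr
    (((Pint_cont n k).continuousOn.sub
      (((Qint_cont n k).continuousOn.div continuousOn_id) (fun a ha => ha))))
  exact fun a ha => In_eq n k ha

lemma In_lt_In (n k : ℕ) {a b : ℝ} (ha : 0 < a) (hab : a < b) (hb : b ≤ 1) :
    In n k a < In n k b := by
  have hb0 : 0 < b := ha.trans hab
  rw [In_eq n k ha.ne', In_eq n k hb0.ne']
  have hint1 : ∀ u v : ℝ, IntervalIntegrable (fun s : ℝ => s ^ (k + 1) * (1 - s) ^ (n - k))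
      MeasureTheory.volume u v := fun u v => (by fun_prop : Continuous _).intervalIntegrable u v
  have hint2 : ∀ u v : ℝ, IntervalIntegrable (fun s : ℝ => s ^ (k + 2) * (1 - s) ^ (n - k))
      MeasureTheory.volume u v := fun u v => (by fun_prop : Continuous _).intervalIntegrable u v
  have hP : Pint n k a + (∫ s in a..b, s ^ (k + 1) * (1 - s) ^ (n - k)) = Pint n k b :=
    intervalIntegral.integral_add_adjacent_intervals (hint1 0 a) (hint1 a b)
  have hQ : Qint n k a + (∫ s in a..b, s ^ (k + 2) * (1 - s) ^ (n - k)) = Qint n k b :=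
    intervalIntegral.integral_add_adjacent_intervals (hint2 0 a) (hint2 a b)
  have key1 : (∫ s in a..b, s ^ (k + 2) * (1 - s) ^ (n - k))
      ≤ b * ∫ s in a..b, s ^ (k + 1) * (1 - s) ^ (n - k) := by
    rw [← intervalIntegral.integral_const_mul]
    apply intervalIntegral.integral_mono_on hab.le (hint2 a b)
      ((by fun_prop : Continuous (fun s : ℝ => b * (s ^ (k + 1) * (1 - s) ^ (n - k)))).intervalIntegrable a b)
    intro s hs
    have h1nn : (0:ℝ) ≤ s ^ (k + 1) * (1 - s) ^ (n - k) :=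
      mul_nonneg (pow_nonneg (ha.le.trans hs.1) _)
        (pow_nonneg (by linarith [hs.2.trans hb] : (0:ℝ) ≤ 1 - s) _)
    calc s ^ (k + 2) * (1 - s) ^ (n - k)
        = s * (s ^ (k + 1) * (1 - s) ^ (n - k)) := by ring
      _ ≤ b * (s ^ (k + 1) * (1 - s) ^ (n - k)) := mul_le_mul_of_nonneg_right hs.2 h1nn
  have key2 : 0 < Qint n k a := by
    apply intervalIntegral.intervalIntegral_pos_of_pos_on (hint2 0 a) _ ha
    intro s hs
    have hs1 : (0:ℝ) < 1 - s := by
      have : a < 1 := lt_of_lt_of_le hab hb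
      linarith [hs.2]
    exact mul_pos (pow_pos hs.1 _) (pow_pos hs1 _)
  have h5 : Qint n k a / b < Qint n k a / a := div_lt_div_of_pos_left key2 ha hab
  have h6 : (Qint n k b - Qint n k a) / b ≤ Pint n k b - Pint n k a := by
    rw [div_le_iff₀ hb0]
    nlinarith [key1, hP, hQ]
  have h7 : Qint n k b / b - Qint n k a / b = (Qint n k b - Qint n k a) / b :=
    (sub_div _ _ _).symm
  linarith

lemma In_pos (n k : ℕ) {a : ℝ} (ha : 0 < a) (ha1 : a ≤ 1) : 0 < In n k a := by
  rw [In_eq_int n k ha.ne']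
  apply div_pos _ ha
  apply intervalIntegral.intervalIntegral_pos_of_pos_on
    ((contg n k a).intervalIntegrable 0 a) _ ha
  intro s hs
  have hs1 : (0:ℝ) < 1 - s := by linarith [hs.2.trans_le ha1]
  exact mul_pos (mul_pos (pow_pos hs.1 _) (by linarith [hs.2])) (pow_pos hs1 _)

lemma In_le (n k : ℕ) {a : ℝ} (ha : 0 < a) (ha1 : a ≤ 1) : In n k a ≤ a := by
  rw [In_eq_int n k ha.ne', div_le_iff₀ ha]
  have hbound : (∫ s in (0:ℝ)..a, s ^ (k + 1) * (a - s) * (1 - s) ^ (n - k))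
      ≤ ∫ s in (0:ℝ)..a, a := by
    apply intervalIntegral.integral_mono_on ha.le
      ((contg n k a).intervalIntegrable 0 a) (intervalIntegrable_const)
    intro s hs
    have hs1 : s ≤ 1 := hs.2.trans ha1
    have h1 : s ^ (k + 1) ≤ 1 := pow_le_one₀ hs.1 hs1
    have h2 : (1 - s) ^ (n - k) ≤ 1 := pow_le_one₀ (by linarith) (by linarith [hs.1])
    have hnn1 : (0:ℝ) ≤ a - s := by linarith [hs.2]
    have hnn2 : (0:ℝ) ≤ s ^ (k + 1) * (a - s) := mul_nonneg (pow_nonneg hs.1 _) hnn1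
    calc s ^ (k + 1) * (a - s) * (1 - s) ^ (n - k)
        ≤ s ^ (k + 1) * (a - s) * 1 := mul_le_mul_of_nonneg_left h2 hnn2
      _ = s ^ (k + 1) * (a - s) := mul_one _
      _ ≤ 1 * (a - s) := mul_le_mul_of_nonneg_right h1 hnn1
      _ ≤ a := by linarith [hs.1]
  have : (∫ s in (0:ℝ)..a, (a:ℝ)) = a * a := by
    rw [intervalIntegral.integral_const]; simp [smul_eq_mul]
  linarith [hbound]

lemma no_two (n x : ℕ) {y z : ℝ} (hy : y ∈ Set.Ioo (0:ℝ) 1) (hz : z ∈ Set.Ioo (0:ℝ) 1)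
    (hyz : y < z) (h1 : In n x y = In n (n - x) (1 - y))
    (h2 : In n x z = In n (n - x) (1 - z)) : False := by
  have A : In n x y < In n x z := In_lt_In n x hy.1 hyz hz.2.le
  have B : In n (n - x) (1 - z) < In n (n - x) (1 - y) :=
    In_lt_In n (n - x) (by linarith [hz.2]) (by linarith) (by linarith [hy.1])
  linarith

/-- Theorem 2 of the paper: the iterative Bayes estimate under the triangle prior exists
and is unique, i.e. there is a unique `τ ∈ (0,1)` with `I_n(τ, x) = I_n(1 − τ, n − x)`. -/
theorem In_fixed_point_exists_unique (n x : ℕ) (hx : x ≤ n) :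
    ∃! τ : ℝ, τ ∈ Set.Ioo (0 : ℝ) 1 ∧ In n x τ = In n (n - x) (1 - τ) := by
  have hc1 : 0 < In n x (1/2) := In_pos n x (by norm_num) (by norm_num)
  have hc2 : 0 < In n (n - x) (1/2) := In_pos n (n - x) (by norm_num) (by norm_num)
  set m : ℝ := min (1/2) (min (In n x (1/2)) (In n (n - x) (1/2))) with hm
  have hm0 : 0 < m := lt_min (by norm_num) (lt_min hc1 hc2)
  set τ₀ : ℝ := m / 2 with hτ₀def
  have h0 : 0 < τ₀ := by positivity
  have hmhalf : m ≤ 1/2 := min_le_left _ _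
  have hhalf : τ₀ < 1/2 := by simp only [hτ₀def]; linarith
  have hτc1 : τ₀ < In n x (1/2) := by
    have := (min_le_right (1/2) _).trans (min_le_left (In n x (1/2)) (In n (n - x) (1/2)))
    simp only [hτ₀def]; linarith
  have hτc2 : τ₀ < In n (n - x) (1/2) := by
    have := (min_le_right (1/2) _).trans (min_le_right (In n x (1/2)) (In n (n - x) (1/2)))
    simp only [hτ₀def]; linarith
  -- the function F
  set F : ℝ → ℝ := fun τ => In n x τ - In n (n - x) (1 - τ) with hF
  have hle : τ₀ ≤ 1 - τ₀ := by linarith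
  have hFcont : ContinuousOn F (Set.Icc τ₀ (1 - τ₀)) := by
    apply ContinuousOn.sub
    · exact (In_contOn n x).mono (fun a ha => ne_of_gt (lt_of_lt_of_le h0 ha.1))
    · apply (In_contOn n (n - x)).comp
        ((continuous_const.sub continuous_id).continuousOn)
      intro a ha
      simp only [Set.mem_Icc] at ha
      simp only [Set.mem_setOf_eq, id]
      intro hcon
      have : a ≤ 1 - τ₀ := ha.2
      simp only [Pi.sub_apply, id_eq] at hcon
      linarith
  have hFa : F τ₀ < 0 := by
    have h1 : In n x τ₀ ≤ τ₀ := In_le n x h0 (by linarith)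
    have h2 : In n (n - x) (1/2) < In n (n - x) (1 - τ₀) :=
      In_lt_In n (n - x) (by norm_num) (by linarith) (by linarith)
    simp only [hF]; linarith
  have hFb : 0 < F (1 - τ₀) := by
    have h1 : In n (n - x) (1 - (1 - τ₀)) ≤ τ₀ := by
      rw [show (1 : ℝ) - (1 - τ₀) = τ₀ by ring]
      exact In_le n (n - x) h0 (by linarith)
    have h2 : In n x (1/2) < In n x (1 - τ₀) :=
      In_lt_In n x (by norm_num) (by linarith) (by linarith)
    simp only [hF]; linarith
  have hmem : (0:ℝ) ∈ Set.Icc (F τ₀) (F (1 - τ₀)) := ⟨hFa.le, hFb.le⟩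
  obtain ⟨τ, hτIcc, hτ0⟩ := intermediate_value_Icc hle hFcont hmem
  have hτmem : τ ∈ Set.Ioo (0:ℝ) 1 := ⟨lt_of_lt_of_le h0 hτIcc.1, by linarith [hτIcc.2]⟩
  have hτeq : In n x τ = In n (n - x) (1 - τ) := by
    have : F τ = 0 := hτ0
    simp only [hF] at this; linarith
  refine ⟨τ, ⟨hτmem, hτeq⟩, ?_⟩
  rintro y ⟨hy, hyeq⟩
  rcases lt_trichotomy y τ with h | h | h
  · exact absurd (no_two n x hy hτmem h hyeq hτeq) (by simp)
  · exact h
  · exact absurd (no_two n x hτmem hy h hτeq hyeq) (by simp)
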